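/- Let b_n be the number of binary trees with multiplicities of size n (so b_0 = 1 for the empty tree, b_1 = 1, b_2 = 3, b_3 = 10, b_4 = 36, b_5 = 137). Then the formal power series S(t) = Σ_{n≥0} b_n tⁿ over ℚ satisfies (1 − t)·(S(t) − 1) = t·S(t)², equivalently t·S(t)² − (1 − t)·S(t) + (1 − t) = 0. -/

import Mathlib

open scoped Classical

/-- Words over the positive integers. -/
abbrev Word : Type := List ℕ+

/-- Evaluation of a word: number of occurrences of each letter. -/
def ev (w : Word) : ℕ+ → ℕ := fun a => w.count a

/-- A monoid congruence on the free monoid `(ℕ⁺)*`. -/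
def IsCongruence (r : Word → Word → Prop) : Prop :=
  Equivalence r ∧ ∀ u v u' v', r u v → r u' v' → r (u ++ u') (v ++ v')

/-- Restriction of a word to the letters belonging to a set `I`. -/
noncomputable def restrictTo (I : Set ℕ+) (w : Word) : Word :=
  w.filter fun a => decide (a ∈ I)

/-- `I` is an interval (order-convex subset) of `ℕ⁺`. -/
def IsIntervalSet (I : Set ℕ+) : Prop :=
  ∀ ⦃a b c : ℕ+⦄, a ∈ I → c ∈ I → a ≤ b → b ≤ c → b ∈ I

/-- Compatibility with restriction to alphabet intervals. -/
def CompatRestrict (r : Word → Word → Prop) : Prop :=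
  ∀ I : Set ℕ+, IsIntervalSet I → ∀ u v, r u v → r (restrictTo I u) (restrictTo I v)

/-- `r` is a `φ`-congruence. -/
def IsPhiCongruence (φ : Word → Word) (r : Word → Word → Prop) : Prop :=
  ∀ u v, r u v ↔ (r (φ u) (φ v) ∧ ev u = ev v)

/-- Standardization. -/
def std (w : Word) : Word :=
  (List.range w.length).map fun i =>
    ⟨((List.range w.length).countP fun j =>
        decide (w.getD j 1 < w.getD i 1 ∨ (w.getD j 1 = w.getD i 1 ∧ j < i))) + 1,
      Nat.succ_pos _⟩

/-- Packing. -/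
def pack (w : Word) : Word :=
  w.map fun a => ⟨(w.dedup.countP fun b => decide (b < a)) + 1, Nat.succ_pos _⟩

theorem parkBad_ex (w : Word) :
    ∃ d : ℕ, 1 ≤ d ∧ (w.countP fun a : ℕ+ => decide ((a : ℕ) ≤ d)) < d :=
  ⟨w.length + 1, Nat.succ_le_succ (Nat.zero_le _), by
    have h : w.countP (fun a : ℕ+ => decide ((a : ℕ) ≤ w.length + 1)) ≤ w.length :=
      List.countP_le_length
    omega⟩

/-- The smallest `d ≥ 1` such that fewer than `d` letters of `w` are `≤ d`. -/
noncomputable def parkBad (w : Word) : ℕ := Nat.find (parkBad_ex w)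

/-- One pass of the parkization procedure, with fuel. -/
noncomputable def parkAux : ℕ → Word → Word
  | 0, w => w
  | f + 1, w =>
    if parkBad w ≤ w.length then
      parkAux f (w.map fun a : ℕ+ => if parkBad w < (a : ℕ) then (a - 1 : ℕ+) else a)
    else w

/-- Parkization. The fuel `(sum of the letters)` always suffices,
since every pass strictly decreases the sum of the letters. -/
noncomputable def park (w : Word) : Word := parkAux (w.map fun a => (a : ℕ)).sum w

/-- Smallest monoid congruence containing `base`. -/
def CongClosure (base : Word → Word → Prop) (u v : Word) : Prop :=
  ∀ r : Word → Word → Prop, IsCongruence r → (∀ x y, base x y → r x y) → r u v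

def sylvBase (x y : Word) : Prop :=
  ∃ (a b c : ℕ+) (v : Word), a ≤ b ∧ b < c ∧
    x = a :: c :: (v ++ [b]) ∧ y = c :: a :: (v ++ [b])

/-- The sylvester congruence. -/
def sylv : Word → Word → Prop := CongClosure sylvBase

def stalBase (x y : Word) : Prop :=
  ∃ (a b : ℕ+) (v : Word), x = b :: a :: (v ++ [b]) ∧ y = a :: b :: (v ++ [b])

/-- The stalactic congruence. -/
def stal : Word → Word → Prop := CongClosure stalBase

def sylvSharpBase (x y : Word) : Prop :=
  ∃ (a b c : ℕ+) (v : Word), a < b ∧ b ≤ c ∧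
    x = b :: (v ++ [a, c]) ∧ y = b :: (v ++ [c, a])

/-- The #-sylvester congruence. -/
def sylvSharp : Word → Word → Prop := CongClosure sylvSharpBase

/-- The taïga congruence: join of the sylvester and stalactic congruences. -/
def taiga : Word → Word → Prop := CongClosure fun u v => sylv u v ∨ stal u v

/-- Planar binary trees with letter labels. -/
inductive BT : Type where
  | leaf : BT
  | node : BT → ℕ+ → BT → BT
deriving DecidableEq

/-- Binary search tree insertion of a letter. -/
def BT.insert : BT → ℕ+ → BT
  | .leaf, l => .node .leaf l .leaf
  | .node L b R, l => if l ≤ b then .node (L.insert l) b R else .node L b (R.insert l)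

/-- Binary search tree of a word: insert the letters from right to left. -/
def bst (w : Word) : BT := w.foldr (fun l t => t.insert l) .leaf

/-- Planar binary trees labelled by a letter and a multiplicity. -/
inductive BSTM : Type where
  | leaf : BSTM
  | node : BSTM → ℕ+ → ℕ+ → BSTM → BSTM   -- left, letter, multiplicity, right
deriving DecidableEq

/-- Insertion of a letter into a binary search tree with multiplicities. -/
def BSTM.insert : BSTM → ℕ+ → BSTM
  | .leaf, l => .node .leaf l 1 .leaf
  | .node L l' k R, l =>
    if l = l' then .node L l' (k + 1) R
    else if l < l' then .node (L.insert l) l' k R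
    else .node L l' k (R.insert l)

/-- The `P`-symbol: insert the letters of `w` from right to left. -/
def Pmap (w : Word) : BSTM := w.foldr (fun l t => t.insert l) .leaf

/-- Letters of a BSTM in left-to-right (infix) order. -/
def BSTM.letters : BSTM → List ℕ+
  | .leaf => []
  | .node L l _ R => L.letters ++ l :: R.letters

/-- The binary search tree property for a BSTM. -/
def BSTM.IsSearchTree : BSTM → Prop
  | .leaf => True
  | .node L l _ R =>
      (∀ x ∈ L.letters, x < l) ∧ (∀ x ∈ R.letters, l < x) ∧
        L.IsSearchTree ∧ R.IsSearchTree

/-- Total multiplicity of a letter in a BSTM. -/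
def BSTM.mult : BSTM → ℕ+ → ℕ
  | .leaf, _ => 0
  | .node L l k R, a => L.mult a + (if a = l then (k : ℕ) else 0) + R.mult a

/-- Size of a BSTM: sum of the multiplicities. -/
def BSTM.size : BSTM → ℕ
  | .leaf => 0
  | .node L _ k R => L.size + (k : ℕ) + R.size

/-- Planar binary trees with multiplicities. -/
inductive BTM : Type where
  | leaf : BTM
  | node : BTM → ℕ+ → BTM → BTM
deriving DecidableEq

/-- Size of a BTM: sum of the multiplicities. -/
def BTM.size : BTM → ℕ
  | .leaf => 0
  | .node L k R => L.size + (k : ℕ) + R.size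

/-- Number of nodes of a BTM. -/
def BTM.numNodes : BTM → ℕ
  | .leaf => 0
  | .node L _ R => L.numNodes + 1 + R.numNodes

/-- Forgetting the letters of a BSTM gives a BTM. -/
def forgetLetters : BSTM → BTM
  | .leaf => .leaf
  | .node L _ k R => .node (forgetLetters L) k (forgetLetters R)

/-- The `B`-symbol: the BTM underlying `P(w)`. -/
def Bmap (w : Word) : BTM := forgetLetters (Pmap w)

/-- A packed word: its set of letters is `{1, …, k}` for some `k`. -/
def IsPacked (w : Word) : Prop := ∀ a ∈ w, ∀ b : ℕ+, b ≤ a → b ∈ w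

/-- Number of packed words inserting to the BTM `T`. -/
noncomputable def fT (T : BTM) : ℕ :=
  Set.ncard {w : Word | IsPacked w ∧ Bmap w = T}

/-- The hook-type product over the subtrees of a BTM. -/
def hookProd : BTM → ℕ
  | .leaf => 1
  | .node L k R =>
      (BTM.node L k R).size * ((k : ℕ) - 1).factorial * hookProd L * hookProd R

/-- Label the nodes of a BTM in infix order starting from a given letter;
returns the labelled tree and the next unused letter. -/
def infixLabelAux : BTM → ℕ+ → BSTM × ℕ+
  | .leaf, n => (.leaf, n)
  | .node L k R, n =>
    let p := infixLabelAux L n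
    let q := infixLabelAux R (p.2 + 1)
    (.node p.1 p.2 k q.1, q.2)

/-- Label the nodes of a BTM by `1, …, k` in infix order. -/
def infixLabel (T : BTM) : BSTM := (infixLabelAux T 1).1

/-- Number of binary trees with multiplicities of size `n`. -/
noncomputable def bNum (n : ℕ) : ℕ := Nat.card {T : BTM // T.size = n}

/-- Generating series of binary trees with multiplicities, counted by size. -/
noncomputable def Sgen : PowerSeries ℚ := PowerSeries.mk fun n => (bNum n : ℚ)

lemma BTM.size_eq_zero {T : BTM} : T.size = 0 ↔ T = .leaf := by
  cases T with
  | leaf => simp [BTM.size]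
  | node L k R =>
    simp only [BTM.size]
    have := k.pos
    constructor
    · intro h; omega
    · intro h; exact absurd h (by simp)

lemma btm_finite_le : ∀ n : ℕ, {T : BTM | T.size ≤ n}.Finite := by
  intro n
  induction n with
  | zero =>
    apply Set.Finite.subset (Set.finite_singleton BTM.leaf)
    intro T hT
    simp only [Set.mem_setOf_eq, Nat.le_zero] at hT
    simp [BTM.size_eq_zero.mp hT]
  | succ n ih =>
    apply Set.Finite.subset
      (Set.Finite.insert BTM.leaf
        (Set.Finite.image (fun x : BTM × ℕ × BTM => BTM.node x.1 ⟨x.2.1 + 1, Nat.succ_pos _⟩ x.2.2)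
          (ih.prod ((Set.finite_Iic n).prod ih))))
    rintro T hT
    cases T with
    | leaf => exact Set.mem_insert _ _
    | node L k R =>
      simp only [Set.mem_setOf_eq, BTM.size] at hT
      have hk := k.pos
      refine Set.mem_insert_of_mem _ ⟨(L, (k : ℕ) - 1, R), ⟨?_, ?_, ?_⟩, ?_⟩
      · simp only [Set.mem_setOf_eq]; omega
      · simp only [Set.mem_Iic]; omega
      · simp only [Set.mem_setOf_eq]; omega
      · have : (⟨(k : ℕ) - 1 + 1, Nat.succ_pos _⟩ : ℕ+) = k := by
          apply PNat.coe_injective; simp; omega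
        simp [this]

lemma btm_finite_eq (n : ℕ) : {T : BTM | T.size = n}.Finite :=
  (btm_finite_le n).subset fun _ h => le_of_eq h

noncomputable def TF (n : ℕ) : Finset BTM := (btm_finite_eq n).toFinset

lemma mem_TF {T : BTM} {n : ℕ} : T ∈ TF n ↔ T.size = n := Set.Finite.mem_toFinset _

lemma bNum_eq (n : ℕ) : bNum n = (TF n).card := by
  have : {T : BTM // T.size = n} = {T : BTM | T.size = n} := rfl
  rw [bNum, this, Nat.card_coe_set_eq, Set.ncard_eq_toFinset_card _ (btm_finite_eq n)]
  rfl

lemma bNum_zero' : bNum 0 = 1 := by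
  rw [bNum_eq]
  have : TF 0 = {BTM.leaf} := by
    ext T; simp [mem_TF, BTM.size_eq_zero]
  simp [this]

lemma bNum_rec (n : ℕ) :
    bNum (n + 1) =
      ∑ m ∈ Finset.range (n + 1), ∑ i ∈ Finset.range (m + 1), bNum i * bNum (m - i) := by
  simp only [bNum_eq, ← Finset.card_product]
  simp only [← Finset.card_sigma]
  symm
  apply Finset.card_bij
    (fun (a : Σ _ : ℕ, Σ _ : ℕ, BTM × BTM) ha =>
      BTM.node a.2.2.1 ⟨n + 1 - a.1, by
        simp only [Finset.mem_sigma, Finset.mem_range] at ha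
        omega⟩ a.2.2.2)
  · rintro ⟨m, i, L, R⟩ ha
    simp only [Finset.mem_sigma, Finset.mem_range, Finset.mem_product, mem_TF] at ha
    obtain ⟨hm, hi, hL, hR⟩ := ha
    rw [mem_TF]
    simp only [BTM.size, hL, hR, PNat.mk_coe]
    omega
  · rintro ⟨m₁, i₁, L₁, R₁⟩ h₁ ⟨m₂, i₂, L₂, R₂⟩ h₂ heq
    simp only [Finset.mem_sigma, Finset.mem_range, Finset.mem_product, mem_TF] at h₁ h₂
    obtain ⟨hm₁, hi₁, hL₁, hR₁⟩ := h₁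
    obtain ⟨hm₂, hi₂, hL₂, hR₂⟩ := h₂
    simp only [BTM.node.injEq] at heq
    obtain ⟨hL, hk, hR⟩ := BTM.node.inj heq
    have hm : m₁ = m₂ := by
      have := congrArg (fun x : ℕ+ => (x : ℕ)) hk
      simp at this
      omega
    have hi : i₁ = i₂ := by rw [← hL₁, ← hL₂, hL]
    subst hm; subst hi; subst hL; subst hR; rfl
  · intro T hT
    rw [mem_TF] at hT
    cases T with
    | leaf => exact absurd hT (by simp [BTM.size])
    | node L k R =>
      have hk := k.pos
      simp only [BTM.size] at hT
      refine ⟨⟨L.size + R.size, L.size, L, R⟩, ?_, ?_⟩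
      · simp only [Finset.mem_sigma, Finset.mem_range, Finset.mem_product, mem_TF]
        exact ⟨by omega, by omega, trivial, by omega⟩
      · simp only [BTM.node.injEq]
        congr 1
        apply PNat.coe_injective
        simp
        omega


lemma bNum_one' : bNum 1 = 1 := by
  rw [bNum_rec 0]; simp [bNum_zero']

lemma bNum_two' : bNum 2 = 3 := by
  rw [bNum_rec 1]
  simp [Finset.sum_range_succ, bNum_zero', bNum_one']

lemma bNum_three' : bNum 3 = 10 := by
  rw [bNum_rec 2]
  simp [Finset.sum_range_succ, bNum_zero', bNum_one', bNum_two']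

lemma bNum_four' : bNum 4 = 36 := by
  rw [bNum_rec 3]
  simp [Finset.sum_range_succ, bNum_zero', bNum_one', bNum_two', bNum_three']

lemma bNum_five' : bNum 5 = 137 := by
  rw [bNum_rec 4]
  simp [Finset.sum_range_succ, bNum_zero', bNum_one', bNum_two', bNum_three', bNum_four']

lemma bNum_step (m : ℕ) :
    bNum (m + 2) = bNum (m + 1) + ∑ i ∈ Finset.range (m + 2), bNum i * bNum (m + 1 - i) := by
  rw [bNum_rec (m + 1), Finset.sum_range_succ, ← bNum_rec m]

lemma sgen_eq : (1 - PowerSeries.X) * (Sgen - 1) = PowerSeries.X * Sgen ^ 2 := by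
  have hexp : (1 - PowerSeries.X) * (Sgen - 1) =
      Sgen - 1 - PowerSeries.X * Sgen + PowerSeries.X * 1 := by ring
  rw [hexp]
  ext n
  rcases n with _ | n
  · simp [Sgen, bNum_zero']
  · rw [map_add, map_sub, map_sub, PowerSeries.coeff_succ_X_mul,
      PowerSeries.coeff_succ_X_mul, PowerSeries.coeff_succ_X_mul, sq,
      PowerSeries.coeff_mul, Finset.Nat.sum_antidiagonal_eq_sum_range_succ_mk]
    simp only [Sgen, PowerSeries.coeff_mk, PowerSeries.coeff_one, mul_one]
    by_cases hn : n = 0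
    · subst hn
      norm_num [bNum_zero', bNum_one']
    · obtain ⟨m, rfl⟩ : ∃ m, n = m + 1 := ⟨n - 1, by omega⟩
      simp only [Nat.succ_ne_zero, if_false, if_neg (by omega : ¬ m + 1 + 1 = 0),
        if_neg (by omega : ¬ m + 1 = 0), sub_zero, add_zero]
      rw [bNum_step m]
      push_cast
      ring

theorem btm_generating_series :
    bNum 0 = 1 ∧ bNum 1 = 1 ∧ bNum 2 = 3 ∧ bNum 3 = 10 ∧ bNum 4 = 36 ∧
      bNum 5 = 137 ∧
      (1 - PowerSeries.X) * (Sgen - 1) = PowerSeries.X * Sgen ^ 2 :=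
  ⟨bNum_zero', bNum_one', bNum_two', bNum_three', bNum_four', bNum_five', sgen_eq⟩
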